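/- arXiv:math/0606763 — 2 statements merged into one kernel-verified Lean document; each statement's English description precedes it below -/
import Mathlib

section
/- Let G be a finite simple loopless graph and k ≥ 0. If there exists a continuous map f : S^{k+1} → |Hom(K₂,G)| with f(−s) = α·f(s) for all s (α the flip of K₂), then there exist r ≥ 1 and a continuous map g : Sᵏ → |Hom(C_{2r+1},G)| with g(−s) = β·g(s) for all s (β the cycle involution v ↦ 2r−v of C_{2r+1}). In other words, coind |Hom(K₂,G)| ≤ 1 + lim_{r→∞} coind |Hom(C_{2r+1},G)|. -/
open Metric unitInterval

noncomputable section

/-- The unit sphere `S^k` in `ℝ^(k+1)`. -/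
abbrev Sph (k : ℕ) : Type := Metric.sphere (0 : EuclideanSpace ℝ (Fin (k+1))) 1

/-- `φ` is a multihomomorphism from `G` to `H`. -/
def IsMultihom {V W : Type*} (G : SimpleGraph V) (H : SimpleGraph W)
    (φ : V → Set W) : Prop :=
  (∀ v, (φ v).Nonempty) ∧ ∀ ⦃u v⦄, G.Adj u v → ∀ a ∈ φ u, ∀ b ∈ φ v, H.Adj a b

/-- The Hom space `|Hom(G,H)|`. -/
def HomSpace {V W : Type*} [Fintype W] (G : SimpleGraph V) (H : SimpleGraph W) : Type _ :=
  {x : V → stdSimplex ℝ W // IsMultihom G H fun v => {w | (x v : W → ℝ) w ≠ 0}}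

instance {V W : Type*} [Fintype W] (G : SimpleGraph V) (H : SimpleGraph W) :
    TopologicalSpace (HomSpace G H) :=
  inferInstanceAs (TopologicalSpace {_x : V → stdSimplex ℝ W // _})

/-- The map `|Hom(G,H)| → |Hom(G',H)|` induced by a graph homomorphism `κ : G' → G`;
for `G' = G` and `κ` an involution this is the induced (left) involution. -/
def pull {V V' W : Type*} [Fintype W] {G : SimpleGraph V} {G' : SimpleGraph V'}
    {H : SimpleGraph W} (κ : G' →g G) (x : HomSpace G H) : HomSpace G' H :=
  ⟨fun v => x.1 (κ v), fun v => x.2.1 (κ v), fun _ _ huv => x.2.2 (κ.map_adj huv)⟩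

/-- The (right) involution of `|Hom(G,H)|` induced by an involution `β` of `H`. -/
def rightAct {V W : Type*} [Fintype W] {G : SimpleGraph V} {H : SimpleGraph W}
    (β : H →g H) (hβ : Function.Involutive β) (x : HomSpace G H) : HomSpace G H :=
  ⟨fun v => ⟨fun b => (x.1 v : W → ℝ) (β b),
    fun b => (x.1 v).2.1 (β b),
    by
      rw [← (x.1 v).2.2]
      exact Fintype.sum_bijective β hβ.bijective _ _ fun b => rfl⟩,
   fun v => by
      obtain ⟨w, hw⟩ := x.2.1 v
      exact ⟨β w, by show (x.1 v : W → ℝ) (β (β w)) ≠ 0; rw [hβ w]; exact hw⟩,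
   fun u v huv a ha b hb => by
      have := x.2.2 huv (β a) ha (β b) hb
      simpa [hβ a, hβ b] using β.map_adj this⟩

/-- The complete graph `K₂` on `{0,1}`. -/
abbrev K2 : SimpleGraph (Fin 2) := SimpleGraph.completeGraph (Fin 2)

/-- The flip involution of `K₂`. -/
def flipK2 : K2 →g K2 :=
  ⟨fun v => 1 - v, fun {a b} h => by fin_cases a <;> fin_cases b <;> simp_all⟩

/-- The cycle `C_m` on `ℤ/m`. -/
def cycle (m : ℕ) : SimpleGraph (ZMod m) where
  Adj u v := u ≠ v ∧ (u + 1 = v ∨ v + 1 = u)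
  symm := ⟨fun _ _ h => ⟨h.1.symm, h.2.symm⟩⟩
  loopless := ⟨fun _ h => h.1 rfl⟩

/-- The involution `v ↦ (m-1) - v = -1 - v` of the cycle `C_m`. -/
def cycFlip (m : ℕ) : cycle m →g cycle m :=
  ⟨fun v => -1 - v, fun {a b} h => by
    refine ⟨fun e => h.1 (sub_right_injective e), ?_⟩
    rcases h.2 with e | e
    · exact Or.inr (by rw [← e]; ring)
    · exact Or.inl (by rw [← e]; ring)⟩

/-- `X` is `m`-connected: nonempty, path-connected, and `πᵢ X` trivial for `1 ≤ i ≤ m`. -/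
def MConnected (m : ℕ) (X : Type*) [TopologicalSpace X] : Prop :=
  Nonempty X ∧ PathConnectedSpace X ∧
    ∀ i, 1 ≤ i → i ≤ m → ∀ x : X, Subsingleton (HomotopyGroup (Fin i) X x)

end


noncomputable section ShrinkAux
variable {V : Type*} [Fintype V]

/-- auxiliary: soft-threshold-and-renormalize of the average of two simplex points. -/
def shr (ε : ℝ) (a b : V → ℝ) : V → ℝ :=
  fun w => max ((a w + b w) / 2 - ε) 0 / ∑ u, max ((a u + b u) / 2 - ε) 0

variable {ε : ℝ} {a b : V → ℝ}

lemma shr_exists_big (hε : 0 < ε) (hcard : (Fintype.card V : ℝ) * ε < 1)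
    (ha : a ∈ stdSimplex ℝ V) (hb : b ∈ stdSimplex ℝ V) :
    ∃ w, ε < (a w + b w) / 2 := by
  by_contra h
  push_neg at h
  have hsum : ∑ w, (a w + b w) / 2 = 1 := by
    rw [← Finset.sum_div, Finset.sum_add_distrib, ha.2, hb.2]; norm_num
  have : (1 : ℝ) ≤ (Fintype.card V : ℝ) * ε := by
    calc (1:ℝ) = ∑ w, (a w + b w)/2 := hsum.symm
      _ ≤ ∑ _w : V, ε := Finset.sum_le_sum (fun w _ => h w)
      _ = (Fintype.card V : ℝ) * ε := by
          rw [Finset.sum_const, nsmul_eq_mul]; simp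
  linarith

lemma shr_den_pos (hε : 0 < ε) (hcard : (Fintype.card V : ℝ) * ε < 1)
    (ha : a ∈ stdSimplex ℝ V) (hb : b ∈ stdSimplex ℝ V) :
    0 < ∑ u, max ((a u + b u) / 2 - ε) 0 := by
  obtain ⟨w, hw⟩ := shr_exists_big hε hcard ha hb
  refine Finset.sum_pos' (fun u _ => le_max_right _ _) ⟨w, Finset.mem_univ w, ?_⟩
  exact lt_max_of_lt_left (by linarith)

lemma shr_mem (hε : 0 < ε) (hcard : (Fintype.card V : ℝ) * ε < 1)
    (ha : a ∈ stdSimplex ℝ V) (hb : b ∈ stdSimplex ℝ V) :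
    shr ε a b ∈ stdSimplex ℝ V := by
  have hd := shr_den_pos hε hcard ha hb
  constructor
  · intro w; exact div_nonneg (le_max_right _ _) hd.le
  · show ∑ w, (max ((a w + b w) / 2 - ε) 0 / ∑ u, max ((a u + b u) / 2 - ε) 0) = 1
    rw [← Finset.sum_div, div_self hd.ne']

lemma shr_ne_iff (hε : 0 < ε) (hcard : (Fintype.card V : ℝ) * ε < 1)
    (ha : a ∈ stdSimplex ℝ V) (hb : b ∈ stdSimplex ℝ V) (w : V) :
    shr ε a b w ≠ 0 ↔ ε < (a w + b w) / 2 := by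
  have hd := shr_den_pos hε hcard ha hb
  unfold shr
  rw [div_ne_zero_iff]
  constructor
  · rintro ⟨h1, -⟩
    rcases le_or_gt ((a w + b w)/2) ε with h | h
    · exact absurd (max_eq_right (by linarith)) h1
    · exact h
  · intro h
    refine ⟨?_, hd.ne'⟩
    have : (0:ℝ) < max ((a w + b w)/2 - ε) 0 := lt_max_of_lt_left (by linarith)
    exact this.ne'

lemma shr_comm : shr ε a b = shr ε b a := by
  funext w; unfold shr
  simp only [add_comm (a _) (b _)]

lemma shr_supp_left (hε : 0 < ε) (hcard : (Fintype.card V : ℝ) * ε < 1)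
    (ha : a ∈ stdSimplex ℝ V) (hb : b ∈ stdSimplex ℝ V)
    (hclose : ∀ u, |a u - b u| ≤ ε) (w : V) (h : shr ε a b w ≠ 0) : a w ≠ 0 := by
  intro ha0
  have h1 := (shr_ne_iff hε hcard ha hb w).1 h
  have h2 : |a w - b w| ≤ ε := hclose w
  have h3 : 0 ≤ b w := hb.1 w
  rw [ha0] at h1 h2
  rw [abs_sub_comm, sub_zero, abs_of_nonneg h3] at h2
  linarith

lemma shr_supp_right (hε : 0 < ε) (hcard : (Fintype.card V : ℝ) * ε < 1)
    (ha : a ∈ stdSimplex ℝ V) (hb : b ∈ stdSimplex ℝ V)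
    (hclose : ∀ u, |a u - b u| ≤ ε) (w : V) (h : shr ε a b w ≠ 0) : b w ≠ 0 := by
  refine shr_supp_left hε hcard hb ha (fun u => by rw [abs_sub_comm]; exact hclose u) w ?_
  rwa [shr_comm]

lemma shr_cont {X : Type*} [TopologicalSpace X] {A B : X → V → ℝ}
    (hA : ∀ w, Continuous fun x => A x w) (hB : ∀ w, Continuous fun x => B x w)
    (hden : ∀ x, (0:ℝ) < ∑ u, max ((A x u + B x u) / 2 - ε) 0) (w : V) :
    Continuous fun x => shr ε (A x) (B x) w := by
  unfold shr
  refine Continuous.div ?_ ?_ (fun x => (hden x).ne')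
  · exact (((hA w).add (hB w)).div_const 2 |>.sub continuous_const).max continuous_const
  · exact continuous_finset_sum _ fun u _ =>
      (((hA u).add (hB u)).div_const 2 |>.sub continuous_const).max continuous_const
















section Master
variable {V : Type*} [Fintype V] {G : SimpleGraph V} {k n : ℕ}

lemma flipK2_flipK2 (v : Fin 2) : flipK2 (flipK2 v) = v := by fin_cases v <;> rfl

lemma pull_flip_flip (x : HomSpace K2 G) : pull flipK2 (pull flipK2 x) = x := by
  apply Subtype.ext
  funext v
  show x.1 (flipK2 (flipK2 v)) = x.1 v
  rw [flipK2_flipK2]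

variable (ε : ℝ) (P : Sph k → ℕ → HomSpace K2 G) (n)

/-- the chain of measures on `V` along the discretized path. -/
def chainF (s : Sph k) (j : ℕ) (v : Fin 2) : V → ℝ :=
  if j % 2 = 0 then ((P s (j/2)).1 v : V → ℝ)
  else shr ε ((P s (j/2)).1 v : V → ℝ) ((P s (j/2+1)).1 v : V → ℝ)

def vtx (q : ℕ) : Fin 2 := ⟨q % 2, Nat.mod_lt _ two_pos⟩

/-- the raw cycle map. -/
def gF (s : Sph k) (i : ZMod (2*(2*n)+1)) : V → ℝ :=
  chainF ε P s ((i + ((2*n+1 : ℕ) : ZMod (2*(2*n)+1))).val / 2)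
    (vtx (i + ((2*n+1 : ℕ) : ZMod (2*(2*n)+1))).val)

variable {ε P n}
variable (hε : 0 < ε) (hcard : (Fintype.card V : ℝ) * ε < 1)
variable (hclose : ∀ (s : Sph k) (i : ℕ), i < n → ∀ (v : Fin 2) (w : V),
    |((P s i).1 v : V → ℝ) w - ((P s (i+1)).1 v : V → ℝ) w| ≤ ε)

lemma adj01 : K2.Adj 0 1 := by simp [SimpleGraph.completeGraph]
lemma adj10 : K2.Adj 1 0 := by simp [SimpleGraph.completeGraph]

include hε hcard in
lemma cmem (s : Sph k) (j : ℕ) (v : Fin 2) : chainF ε P s j v ∈ stdSimplex ℝ V := by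
  unfold chainF
  split
  · exact ((P s (j/2)).1 v).2
  · exact shr_mem hε hcard ((P s (j/2)).1 v).2 ((P s (j/2+1)).1 v).2

include hε hcard in
lemma cne (s : Sph k) (j : ℕ) (v : Fin 2) : ∃ w, chainF ε P s j v w ≠ 0 := by
  unfold chainF
  split
  · obtain ⟨w, hw⟩ := (P s (j/2)).2.1 v
    exact ⟨w, hw⟩
  · obtain ⟨w, hw⟩ := shr_exists_big hε hcard ((P s (j/2)).1 v).2 ((P s (j/2+1)).1 v).2
    exact ⟨w, (shr_ne_iff hε hcard ((P s (j/2)).1 v).2 ((P s (j/2+1)).1 v).2 w).2 hw⟩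

include hε hcard hclose in
lemma cK2 (s : Sph k) (j : ℕ) (hj : j % 2 = 1 → j/2 < n) :
    ∀ a b, chainF ε P s j 0 a ≠ 0 → chainF ε P s j 1 b ≠ 0 → G.Adj a b := by
  intro a b ha hb
  unfold chainF at ha hb
  by_cases h2 : j % 2 = 0
  · rw [if_pos h2] at ha hb
    exact (P s (j/2)).2.2 adj01 a ha b hb
  · rw [if_neg h2] at ha hb
    have hlt : j/2 < n := hj (by omega)
    have ha' := shr_supp_left hε hcard ((P s (j/2)).1 0).2 ((P s (j/2+1)).1 0).2
      (fun u => hclose s (j/2) hlt 0 u) a ha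
    have hb' := shr_supp_left hε hcard ((P s (j/2)).1 1).2 ((P s (j/2+1)).1 1).2
      (fun u => hclose s (j/2) hlt 1 u) b hb
    exact (P s (j/2)).2.2 adj01 a ha' b hb'

include hε hcard hclose in
lemma cstep (s : Sph k) (j : ℕ) (hj : j + 1 ≤ 2*n) :
    ∀ a b, chainF ε P s j 1 a ≠ 0 → chainF ε P s (j+1) 0 b ≠ 0 → G.Adj a b := by
  intro a b ha hb
  unfold chainF at ha hb
  by_cases h2 : j % 2 = 0
  · rw [if_pos h2] at ha
    rw [if_neg (by omega), show (j+1)/2 = j/2 by omega] at hb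
    have hlt : j/2 < n := by omega
    have hb' := shr_supp_left hε hcard ((P s (j/2)).1 0).2 ((P s (j/2+1)).1 0).2
      (fun u => hclose s (j/2) hlt 0 u) b hb
    exact (P s (j/2)).2.2 adj10 a ha b hb'
  · rw [if_neg h2] at ha
    rw [if_pos (by omega), show (j+1)/2 = j/2+1 by omega] at hb
    have hlt : j/2 < n := by omega
    have ha' := shr_supp_right hε hcard ((P s (j/2)).1 1).2 ((P s (j/2+1)).1 1).2
      (fun u => hclose s (j/2) hlt 1 u) a ha
    exact (P s (j/2+1)).2.2 adj10 a ha' b hb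

variable (hPflip : ∀ (s : Sph k) (i : ℕ), i ≤ n → P (-s) i = pull flipK2 (P s (n-i)))

include hPflip in
lemma cflip (s : Sph k) (j : ℕ) (hj : j ≤ 2*n) (v : Fin 2) :
    chainF ε P (-s) j v = chainF ε P s (2*n - j) (flipK2 v) := by
  unfold chainF
  by_cases h2 : j % 2 = 0
  · rw [if_pos h2, if_pos (by omega), show (2*n-j)/2 = n - j/2 by omega,
      hPflip s (j/2) (by omega)]
    rfl
  · rw [if_neg h2, if_neg (by omega), show (2*n-j)/2 = n - j/2 - 1 by omega,
      show n - j/2 - 1 + 1 = n - j/2 by omega,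
      hPflip s (j/2) (by omega), hPflip s (j/2+1) (by omega),
      show n - (j/2+1) = n - j/2 - 1 by omega]
    show shr ε ((P s (n - j/2)).1 (flipK2 v) : V → ℝ) ((P s (n - j/2 - 1)).1 (flipK2 v) : V → ℝ) = _
    rw [shr_comm]

lemma vtx_eq_zero {q : ℕ} (h : q % 2 = 0) : vtx q = 0 := Fin.ext (by simp [vtx, h])

lemma vtx_eq_one {q : ℕ} (h : q % 2 = 1) : vtx q = 1 := Fin.ext (by simp [vtx, h])

lemma flipK2_zero : flipK2 0 = 1 := rfl

lemma flipK2_one : flipK2 1 = 0 := rfl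

lemma pull_apply {V' W' : Type*} [Fintype W'] {G1 : SimpleGraph V'} {G2 : SimpleGraph V'}
    {H : SimpleGraph W'} (kap : G1 →g G2) (x : HomSpace G2 H) (v : V') :
    (pull kap x).1 v = x.1 (kap v) := rfl

variable (hP0 : ∀ s s' : Sph k, P s 0 = P s' 0) (hn : 1 ≤ n)

include hPflip hP0 in
lemma Pn_eq (s : Sph k) : P s n = pull flipK2 (P s 0) := by
  have h := hPflip s 0 (Nat.zero_le n)
  rw [hP0 (-s) s, Nat.sub_zero] at h
  rw [h, pull_flip_flip]

include hn in
lemma val_next (i : ZMod (2*(2*n)+1)) :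
    ((i + 1) + ((2*n+1:ℕ) : ZMod (2*(2*n)+1))).val
      = (((i + ((2*n+1:ℕ) : ZMod (2*(2*n)+1))).val) + 1) % (2*(2*n)+1) := by
  haveI : Fact (1 < 2*(2*n)+1) := ⟨by omega⟩
  rw [show (i + 1) + ((2*n+1:ℕ) : ZMod (2*(2*n)+1))
      = (i + ((2*n+1:ℕ) : ZMod (2*(2*n)+1))) + 1 by ring,
    ZMod.val_add, ZMod.val_one]

include hε hcard hclose hPflip hP0 hn in
lemma gcore (s : Sph k) (u : ZMod (2*(2*n)+1)) :
    ∀ a b, gF n ε P s u a ≠ 0 → gF n ε P s (u+1) b ≠ 0 → G.Adj a b := by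
  intro a b ha hb
  unfold gF at ha hb
  rw [val_next hn u] at hb
  set q := (u + ((2*n+1:ℕ) : ZMod (2*(2*n)+1))).val with hqdef
  have hq : q < 2*(2*n)+1 := ZMod.val_lt _
  by_cases hlast : q = 2*(2*n)
  · rw [hlast] at ha hb
    rw [show (2*(2*n)+1) % (2*(2*n)+1) = 0 from Nat.mod_self _] at hb
    rw [vtx_eq_zero (by omega)] at ha
    rw [vtx_eq_zero (by omega)] at hb
    unfold chainF at ha hb
    rw [if_pos (by omega), show (2*(2*n))/2/2 = n from by omega] at ha
    rw [if_pos (by omega), show (0:ℕ)/2 = 0 from rfl] at hb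
    rw [Pn_eq hPflip hP0 s, pull_apply, flipK2_zero] at ha
    exact (P s 0).2.2 adj10 a ha b hb
  · rw [Nat.mod_eq_of_lt (by omega)] at hb
    by_cases h2 : q % 2 = 0
    · rw [vtx_eq_zero h2] at ha
      rw [vtx_eq_one (by omega), show (q+1)/2 = q/2 from by omega] at hb
      exact cK2 hε hcard hclose s (q/2) (by omega) a b ha hb
    · rw [vtx_eq_one (by omega)] at ha
      rw [vtx_eq_zero (by omega), show (q+1)/2 = q/2 + 1 from by omega] at hb
      exact cstep hε hcard hclose s (q/2) (by omega) a b ha hb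

include hPflip hP0 hn in
lemma gflip (s : Sph k) (i : ZMod (2*(2*n)+1)) :
    gF n ε P (-s) i = gF n ε P s (-1 - i) := by
  haveI : NeZero (2*(2*n)+1) := ⟨by omega⟩
  have h2C : ((2*n+1:ℕ) : ZMod (2*(2*n)+1)) * 2 = 1 := by
    have hm : ((2*(2*n)+1 : ℕ) : ZMod (2*(2*n)+1)) = 0 := ZMod.natCast_self _
    calc ((2*n+1:ℕ) : ZMod (2*(2*n)+1)) * 2
        = ((2*(2*n)+1 : ℕ) : ZMod (2*(2*n)+1)) + 1 := by push_cast; ring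
      _ = 1 := by rw [hm, zero_add]
  have hneg : (-1 - i) + ((2*n+1:ℕ) : ZMod (2*(2*n)+1))
      = -(i + ((2*n+1:ℕ) : ZMod (2*(2*n)+1))) := by
    linear_combination h2C
  unfold gF
  rw [hneg, ZMod.neg_val]
  set q := (i + ((2*n+1:ℕ) : ZMod (2*(2*n)+1))).val with hqdef
  have hq : q < 2*(2*n)+1 := ZMod.val_lt _
  by_cases h0 : i + ((2*n+1:ℕ) : ZMod (2*(2*n)+1)) = 0
  · rw [if_pos h0]
    have hq0 : q = 0 := by rw [hqdef, h0, ZMod.val_zero]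
    rw [hq0]
    rw [cflip hPflip s (0/2) (by omega)]
    rw [show (0:ℕ)/2 = 0 from rfl, Nat.sub_zero, vtx_eq_zero (by omega), flipK2_zero]
    unfold chainF
    rw [if_pos (by omega), if_pos (by omega), show (2*n)/2 = n from by omega,
      show (0:ℕ)/2 = 0 from rfl, Pn_eq hPflip hP0 s, pull_apply, flipK2_one]
  · rw [if_neg h0]
    have hq1 : 1 ≤ q := by
      rcases Nat.eq_zero_or_pos q with h | h
      · exact absurd ((ZMod.val_eq_zero _).1 h) h0
      · exact h
    rw [cflip hPflip s (q/2) (by omega)]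
    by_cases h2 : q % 2 = 0
    · rw [vtx_eq_zero h2, flipK2_zero, vtx_eq_one (by omega),
        show (2*(2*n)+1 - q)/2 = 2*n - q/2 from by omega]
    · rw [vtx_eq_one (by omega), flipK2_one, vtx_eq_zero (by omega),
        show (2*(2*n)+1 - q)/2 = 2*n - q/2 from by omega]

variable (hPcont : ∀ j, Continuous fun s : Sph k => P s j)

include hPcont in
lemma Pcc (j : ℕ) (v : Fin 2) (w : V) :
    Continuous fun s : Sph k => ((P s j).1 v : V → ℝ) w :=
  (continuous_apply w).comp (continuous_subtype_val.comp
    ((continuous_apply v).comp (continuous_subtype_val.comp (hPcont j))))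

include hε hcard hPcont in
lemma gcont (i : ZMod (2*(2*n)+1)) (w : V) :
    Continuous fun s : Sph k => gF n ε P s i w := by
  unfold gF chainF
  by_cases h2 : ((i + ((2*n+1:ℕ) : ZMod (2*(2*n)+1))).val / 2) % 2 = 0
  · simp only [if_pos h2]
    exact Pcc hPcont _ _ w
  · simp only [if_neg h2]
    exact shr_cont (fun u => Pcc hPcont _ _ u) (fun u => Pcc hPcont _ _ u)
      (fun s => shr_den_pos hε hcard ((P s _).1 _).2 ((P s _).1 _).2) w

include hn hε hcard hclose hPflip hP0 hPcont in
theorem master :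
    ∃ g : Sph k → HomSpace (cycle (2*(2*n)+1)) G,
      Continuous g ∧ ∀ s, g (-s) = pull (cycFlip (2*(2*n)+1)) (g s) := by
  refine ⟨fun s => ⟨fun i => ⟨gF n ε P s i, cmem hε hcard s _ _⟩, ?_, ?_⟩, ?_, ?_⟩
  · intro i
    obtain ⟨w, hw⟩ := cne hε hcard s ((i + ((2*n+1:ℕ) : ZMod (2*(2*n)+1))).val / 2)
      (vtx (i + ((2*n+1:ℕ) : ZMod (2*(2*n)+1))).val)
    exact ⟨w, hw⟩
  · intro u v' huv a ha b hb
    rcases huv.2 with he | he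
    · rw [← he] at hb
      exact gcore hε hcard hclose hPflip hP0 hn s u a b ha hb
    · rw [← he] at ha
      exact (gcore hε hcard hclose hPflip hP0 hn s v' b a hb ha).symm
  · refine Continuous.subtype_mk ?_ _
    refine continuous_pi fun i => ?_
    refine Continuous.subtype_mk ?_ _
    exact continuous_pi fun w => gcont hε hcard hPcont i w
  · intro s
    apply Subtype.ext
    funext i
    apply Subtype.ext
    show gF n ε P (-s) i = gF n ε P s ((cycFlip (2*(2*n)+1)) i)
    have hcyc : (cycFlip (2*(2*n)+1)) i = -1 - i := rfl
    rw [hcyc, gflip hPflip hP0 hn s i]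

end Master


end ShrinkAux

noncomputable section ArcAux

variable {k : ℕ}

/-- the vector of the arc through `s` at time `t`. -/
def arcVec (s : Sph k) (t : I) : EuclideanSpace ℝ (Fin (k+2)) :=
  (PiLp.continuousLinearEquiv 2 ℝ (fun _ : Fin (k+2) => ℝ)).symm
    (Fin.snoc (fun j => Real.sqrt (1 - (1 - 2*(t:ℝ))^2) *
      (s : EuclideanSpace ℝ (Fin (k+1))) j) (1 - 2*(t:ℝ)))

lemma arcVec_apply_castSucc (s : Sph k) (t : I) (j : Fin (k+1)) :
    arcVec s t j.castSucc = Real.sqrt (1 - (1 - 2*(t:ℝ))^2) *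
      (s : EuclideanSpace ℝ (Fin (k+1))) j := by
  show (Fin.snoc (fun j => Real.sqrt (1 - (1 - 2*(t:ℝ))^2) *
      (s : EuclideanSpace ℝ (Fin (k+1))) j) (1 - 2*(t:ℝ)) : Fin (k+2) → ℝ) j.castSucc = _
  rw [Fin.snoc_castSucc]

lemma arcVec_apply_last (s : Sph k) (t : I) :
    arcVec s t (Fin.last (k+1)) = 1 - 2*(t:ℝ) := by
  show (Fin.snoc (fun j => Real.sqrt (1 - (1 - 2*(t:ℝ))^2) *
      (s : EuclideanSpace ℝ (Fin (k+1))) j) (1 - 2*(t:ℝ)) : Fin (k+2) → ℝ) (Fin.last (k+1)) = _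
  rw [Fin.snoc_last]

lemma sum_sq_eq_one (s : Sph k) :
    ∑ j, ((s : EuclideanSpace ℝ (Fin (k+1))) j)^2 = 1 := by
  have h : ‖(s : EuclideanSpace ℝ (Fin (k+1)))‖ = 1 := by
    have := s.2
    rwa [mem_sphere_zero_iff_norm] at this
  rw [EuclideanSpace.norm_eq] at h
  have h2 : ∑ i, ‖(s : EuclideanSpace ℝ (Fin (k+1))) i‖^2 = 1 := by
    have := congrArg (fun x : ℝ => x^2) h
    simpa [Real.sq_sqrt (Finset.sum_nonneg fun i _ => sq_nonneg _)] using this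
  simpa [sq_abs] using h2

lemma arcVec_mem (s : Sph k) (t : I) : arcVec s t ∈ Metric.sphere (0 : EuclideanSpace ℝ (Fin (k+2))) 1 := by
  rw [mem_sphere_zero_iff_norm, EuclideanSpace.norm_eq]
  have hc : (1 - 2*(t:ℝ))^2 ≤ 1 := by
    have h0 := t.2.1; have h1 := t.2.2
    nlinarith
  have : ∑ i, ‖arcVec s t i‖^2 = 1 := by
    rw [Fin.sum_univ_castSucc]
    have : ∀ j : Fin (k+1), ‖arcVec s t j.castSucc‖^2
        = (1 - (1 - 2*(t:ℝ))^2) * ((s : EuclideanSpace ℝ (Fin (k+1))) j)^2 := by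
      intro j
      rw [arcVec_apply_castSucc, Real.norm_eq_abs, sq_abs, mul_pow,
        Real.sq_sqrt (by linarith)]
    rw [Finset.sum_congr rfl (fun j _ => this j), ← Finset.mul_sum, sum_sq_eq_one,
      arcVec_apply_last, Real.norm_eq_abs, sq_abs]
    ring
  rw [this, Real.sqrt_one]

/-- the arc through `s`, from the north pole (t=0) to the south pole (t=1). -/
def arc (s : Sph k) (t : I) : Sph (k+1) := ⟨arcVec s t, arcVec_mem s t⟩

lemma arc_zero (s s' : Sph k) : arc s 0 = arc s' 0 := by
  apply Subtype.ext
  show arcVec s 0 = arcVec s' 0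
  ext i
  refine Fin.lastCases ?_ (fun j => ?_) i
  · rw [arcVec_apply_last, arcVec_apply_last]
  · rw [arcVec_apply_castSucc, arcVec_apply_castSucc]
    norm_num

lemma arc_neg (s : Sph k) (t : I) : arc (-s) t = -arc s (σ t) := by
  apply Subtype.ext
  rw [coe_neg_sphere]
  ext i
  show arcVec (-s) t i = -(arcVec s (σ t) i)
  have hsq : (1 - 2*((σ t : I):ℝ))^2 = (1 - 2*(t:ℝ))^2 := by
    rw [coe_symm_eq]; ring
  refine Fin.lastCases ?_ (fun j => ?_) i
  · rw [arcVec_apply_last, arcVec_apply_last, coe_symm_eq]; ring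
  · rw [arcVec_apply_castSucc, arcVec_apply_castSucc, coe_neg_sphere, hsq]
    show Real.sqrt _ * (-(s : EuclideanSpace ℝ (Fin (k+1)))) j = _
    have : (-(s : EuclideanSpace ℝ (Fin (k+1)))) j = -((s : EuclideanSpace ℝ (Fin (k+1))) j) := rfl
    rw [this]; ring

lemma arc_cont : Continuous fun q : Sph k × I => arc q.1 q.2 := by
  refine Continuous.subtype_mk ?_ _
  unfold arcVec
  refine ((PiLp.continuousLinearEquiv 2 ℝ (fun _ : Fin (k+2) => ℝ)).symm.continuous).comp ?_
  refine continuous_pi fun i => ?_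
  refine Fin.lastCases ?_ (fun j => ?_) i
  · simp only [Fin.snoc_last]
    fun_prop
  · simp only [Fin.snoc_castSucc]
    have h1 : Continuous fun q : Sph k × I => Real.sqrt (1 - (1 - 2*((q.2:I):ℝ))^2) := by
      fun_prop
    have h2 : Continuous fun q : Sph k × I => (q.1 : EuclideanSpace ℝ (Fin (k+1))) j := by
      exact (continuous_apply j).comp
        ((PiLp.continuousLinearEquiv 2 ℝ (fun _ : Fin (k+1) => ℝ)).continuous.comp
          (continuous_subtype_val.comp continuous_fst))
    exact h1.mul h2
end ArcAux

set_option maxHeartbeats 1000000 in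
theorem coindex_K2_le_colim_coindex {V : Type*} [Fintype V] (G : SimpleGraph V)
    (k : ℕ) (f : Sph (k + 1) → HomSpace K2 G) (hf : Continuous f)
    (hfe : ∀ s, f (-s) = pull flipK2 (f s)) :
    ∃ r : ℕ, 1 ≤ r ∧ ∃ g : Sph k → HomSpace (cycle (2 * r + 1)) G,
      Continuous g ∧ ∀ s, g (-s) = pull (cycFlip (2 * r + 1)) (g s) := by
  classical
  -- the threshold
  set ε : ℝ := (2 * ((Fintype.card V : ℝ) + 1))⁻¹ with hεdef
  have hε : 0 < ε := by positivity
  have hcard : (Fintype.card V : ℝ) * ε < 1 := by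
    rw [hεdef, ← div_eq_mul_inv, div_lt_one (by positivity)]
    have : (0:ℝ) ≤ (Fintype.card V : ℝ) := Nat.cast_nonneg _
    linarith
  -- uniform continuity of the coordinates of the path family
  have hFc : Continuous fun q : Sph k × I =>
      (fun vw : Fin 2 × V => ((f (arc q.1 q.2)).1 vw.1 : V → ℝ) vw.2) := by
    refine continuous_pi fun vw => ?_
    exact (continuous_apply vw.2).comp (continuous_subtype_val.comp
      ((continuous_apply vw.1).comp (continuous_subtype_val.comp (hf.comp arc_cont))))
  have hUC := CompactSpace.uniformContinuous_of_continuous hFc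
  obtain ⟨δ, hδ, hδimp⟩ := Metric.uniformContinuous_iff.1 hUC ε hε
  obtain ⟨n0, hn0⟩ := exists_nat_one_div_lt hδ
  set n : ℕ := n0 + 1 with hndef
  have hn : 1 ≤ n := by omega
  have hnR : (0:ℝ) < n := by positivity
  -- the discretized family of paths
  set Tc : ℕ → I := fun i => ⟨min ((i:ℝ)/n) 1,
    Set.mem_Icc.2 ⟨le_min (by positivity) zero_le_one, min_le_right _ _⟩⟩ with hTcdef
  have hTc : ∀ i, i ≤ n → ((Tc i : I) : ℝ) = (i:ℝ)/n := by
    intro i hi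
    show min ((i:ℝ)/n) 1 = (i:ℝ)/n
    exact min_eq_left (by rw [div_le_one hnR]; exact_mod_cast hi)
  set P : Sph k → ℕ → HomSpace K2 G := fun s i => f (arc s (Tc i)) with hPdef
  have hP0 : ∀ s s' : Sph k, P s 0 = P s' 0 := by
    intro s s'
    show f (arc s (Tc 0)) = f (arc s' (Tc 0))
    have h0 : Tc 0 = 0 := Subtype.ext (by simp [hTcdef])
    rw [h0, arc_zero s s']
  have hPflip : ∀ (s : Sph k) (i : ℕ), i ≤ n → P (-s) i = pull flipK2 (P s (n-i)) := by
    intro s i hi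
    show f (arc (-s) (Tc i)) = pull flipK2 (f (arc s (Tc (n-i))))
    have hσ : σ (Tc i) = Tc (n-i) := by
      apply Subtype.ext
      rw [coe_symm_eq, hTc i hi, hTc (n-i) (Nat.sub_le n i), Nat.cast_sub hi]
      field_simp
    rw [arc_neg s (Tc i), hσ, hfe]
  have hclose : ∀ (s : Sph k) (i : ℕ), i < n → ∀ (v : Fin 2) (w : V),
      |((P s i).1 v : V → ℝ) w - ((P s (i+1)).1 v : V → ℝ) w| ≤ ε := by
    intro s i hi v w
    have hd : dist ((s, Tc i) : Sph k × I) (s, Tc (i+1)) < δ := by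
      rw [Prod.dist_eq]
      have h1 : dist s s = 0 := dist_self s
      have h2 : dist (Tc i) (Tc (i+1)) = 1/(n:ℝ) := by
        rw [Subtype.dist_eq, Real.dist_eq, hTc i (by omega), hTc (i+1) (by omega)]
        rw [show (i:ℝ)/n - ((i+1:ℕ):ℝ)/n = -(1/n) by push_cast; field_simp; ring]
        rw [abs_neg, abs_of_nonneg (by positivity)]
      rw [h1, h2]
      have : (1:ℝ)/n < δ := by
        rw [hndef]; push_cast; exact hn0
      simpa using this
    have := hδimp hd
    have hco := le_trans (dist_le_pi_dist _ _ (v, w)) this.le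
    rw [Real.dist_eq] at hco
    exact hco
  have hPcont : ∀ j, Continuous fun s : Sph k => P s j := by
    intro j
    have h1 : Continuous fun s : Sph k => ((s, Tc j) : Sph k × I) :=
      continuous_id.prodMk continuous_const
    have h2 := arc_cont.comp h1
    have h3 := hf.comp h2
    exact h3
  obtain ⟨g, hgc, hge⟩ := master hε hcard hclose hPflip hP0 hn hPcont
  exact ⟨2*n, by omega, g, hgc, hge⟩
end

section
/- Let G be a finite simple loopless graph with a graph involution α. Then: (a) the map ι sending each vertex {u, α(u)} of G^{Z₂} to the subset {u, α(u)} of V(G) is a multihomomorphism from G^{Z₂} to G satisfying α[ι(A)] = ι(A) for every vertex A of G^{Z₂}; and (b) for every finite simple loopless graph H and every multihomomorphism h from H to G satisfying α[h(v)] = h(v) for all vertices v of H, there exists a unique multihomomorphism g from H to G^{Z₂} such that h(v) = ⋃_{A ∈ g(v)} A for all v. -/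
open Metric unitInterval

noncomputable section

/-- The vertices of `G^{Z₂}`: the sets `{u, α u}` for vertices `u`. -/
def FixVert {V : Type*} (α : V → V) : Type _ := {A : Set V // ∃ u, A = {u, α u}}

instance {V : Type*} [Finite V] (α : V → V) : Finite (FixVert α) :=
  inferInstanceAs (Finite {_A : Set V // _})

noncomputable instance {V : Type*} [Fintype V] (α : V → V) : Fintype (FixVert α) :=
  Fintype.ofFinite _

/-- The graph `G^{Z₂}` associated to a graph `G` with involution `α`. -/
def fixGraph {V : Type*} (G : SimpleGraph V) (α : G →g G) (hα : Function.Involutive α) :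
    SimpleGraph (FixVert (α : V → V)) where
  Adj A B := ∃ u v, A.1 = {u, α u} ∧ B.1 = {v, α v} ∧ G.Adj u v ∧ G.Adj u (α v)
  symm := by
    constructor
    rintro _ _ ⟨u, v, hA, hB, h1, h2⟩
    refine ⟨v, u, hB, hA, h1.symm, ?_⟩
    have := α.map_adj h2
    rw [hα] at this
    exact this.symm
  loopless := by
    constructor
    rintro A ⟨u, v, hA, hB, h1, h2⟩
    have hv : v ∈ ({u, α u} : Set V) := by
      rw [← hA, hB]; exact Set.mem_insert _ _
    simp only [Set.mem_insert_iff, Set.mem_singleton_iff] at hv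
    rcases hv with rfl | rfl
    · exact h1.ne rfl
    · rw [hα] at h2
      exact h2.ne rfl

lemma flipK2_involutive : Function.Involutive (flipK2 : Fin 2 → Fin 2) := fun v => by fin_cases v <;> rfl

lemma cycFlip_involutive (m : ℕ) : Function.Involutive (cycFlip m : ZMod m → ZMod m) :=
  fun v => by show -1 - (-1 - v) = v; ring

end

theorem fixGraph_universal_property {V : Type*} (G : SimpleGraph V)
    (α : G →g G) (hα : Function.Involutive α) :
    (IsMultihom (fixGraph G α hα) G (fun A => A.1) ∧
      ∀ A : FixVert (α : V → V), (α : V → V) '' A.1 = A.1) ∧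
    ∀ {W : Type*} (H : SimpleGraph W) (h : W → Set V),
      IsMultihom H G h → (∀ v, (α : V → V) '' h v = h v) →
      ∃! g : W → Set (FixVert (α : V → V)),
        IsMultihom H (fixGraph G α hα) g ∧ ∀ v, h v = ⋃ A ∈ g v, A.1 := by
  constructor
  · constructor
    · constructor
      · rintro ⟨A, u, rfl⟩
        exact ⟨u, Set.mem_insert _ _⟩
      · rintro A B ⟨u, v, hA, hB, h1, h2⟩ a ha b hb
        simp only [hA, Set.mem_insert_iff, Set.mem_singleton_iff] at ha
        simp only [hB, Set.mem_insert_iff, Set.mem_singleton_iff] at hb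
        have h3 : G.Adj (α u) (α v) := α.map_adj h1
        have h4 : G.Adj (α u) v := by have := α.map_adj h2; rwa [hα] at this
        rcases ha with rfl | rfl <;> rcases hb with rfl | rfl <;> assumption
    · rintro ⟨A, u, rfl⟩
      show (α : V → V) '' _ = _
      rw [Set.image_insert_eq, Set.image_singleton, hα u, Set.pair_comm]
  · intro W H h hmulti hinv
    have hαmem : ∀ {v x}, x ∈ h v → (α : V → V) x ∈ h v := by
      intro v x hx
      rw [← hinv v]; exact ⟨x, hx, rfl⟩
    refine ⟨fun v => {A | A.1 ⊆ h v}, ⟨⟨?_, ?_⟩, ?_⟩, ?_⟩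
    · intro v
      obtain ⟨u, hu⟩ := hmulti.1 v
      refine ⟨⟨{u, α u}, u, rfl⟩, ?_⟩
      rintro x (rfl | rfl)
      · exact hu
      · exact hαmem hu
    · rintro u v huv A hA B hB
      obtain ⟨a, ha⟩ := A.2
      obtain ⟨b, hb⟩ := B.2
      have haA : a ∈ A.1 := by rw [ha]; exact Set.mem_insert _ _
      have hbB : b ∈ B.1 := by rw [hb]; exact Set.mem_insert _ _
      have hαbB : (α : V → V) b ∈ B.1 := by
        rw [hb]; exact Set.mem_insert_of_mem _ rfl
      exact ⟨a, b, ha, hb, hmulti.2 huv a (hA haA) b (hB hbB),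
        hmulti.2 huv a (hA haA) _ (hB hαbB)⟩
    · intro v
      ext x
      constructor
      · intro hx
        refine Set.mem_iUnion₂.2 ⟨⟨{x, α x}, x, rfl⟩, ?_, Set.mem_insert _ _⟩
        rintro y (rfl | rfl)
        · exact hx
        · exact hαmem hx
      · intro hx
        obtain ⟨A, hA, hxA⟩ := Set.mem_iUnion₂.1 hx
        exact hA hxA
    · rintro g' ⟨⟨g'ne, g'adj⟩, g'union⟩
      funext v
      ext A
      simp only [Set.mem_setOf_eq]
      constructor
      · intro hA x hx
        rw [g'union v]
        exact Set.mem_biUnion hA hx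
      · intro hA
        obtain ⟨u, hAu⟩ := A.2
        have huA : u ∈ A.1 := by rw [hAu]; exact Set.mem_insert _ _
        have hu : u ∈ ⋃ B ∈ g' v, B.1 := by rw [← g'union v]; exact hA huA
        obtain ⟨B, hB, huB⟩ := Set.mem_iUnion₂.1 hu
        obtain ⟨w, hBw⟩ := B.2
        have : A = B := by
          apply Subtype.ext
          rw [hAu, hBw]
          rw [hBw] at huB
          rcases huB with rfl | huB
          · rfl
          · simp only [Set.mem_singleton_iff] at huB
            subst huB
            rw [hα w, Set.pair_comm]
        exact this ▸ hB
end
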